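/- arXiv:1202.2928 — 4 statements merged into one kernel-verified Lean document; each statement's English description precedes it below -/
import Mathlib

section
/- Let $T$ be an activation sequence for the technology diffusion process (graph $G$, thresholds $\theta$, seedset $\mathrm{OPT}$), and define a connector as a node whose activation merges two or more disjoint connected components of the previously active nodes into one. Then the number of connectors in $T$ is at most $|\mathrm{OPT}|$. -/
/-- The number of vertices of the connected component containing `v` in the
subgraph of `G` induced by `insert v A`. -/
noncomputable def compCard {V : Type*} (G : SimpleGraph V) (A : Set V) (v : V) : ℕ :=
  Nat.card {u : (insert v A : Set V) //
    (G.induce (insert v A)).Reachable ⟨v, Set.mem_insert v A⟩ u}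

/-- `T` is an activation sequence for seedset `S`. -/
def ValidSeq {V : Type*} [Fintype V] (G : SimpleGraph V) (θ : V → ℕ) (S : Set V)
    (T : V ≃ Fin (Fintype.card V)) : Prop :=
  ∀ u, u ∉ S → θ u ≤ compCard G {v | T v < T u} u

/-- The number of connected components of the subgraph of `G` induced by `A`. -/
noncomputable def nComp {V : Type*} (G : SimpleGraph V) (A : Set V) : ℕ :=
  Nat.card (G.induce A).ConnectedComponent

/-- A node `u` is a connector for the activation sequence `T` if its
activation merges two or more disjoint connected components of the
previously active nodes into one, i.e. the number of connected components
decreases when `u` activates. -/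
def IsConnector {V : Type*} [Fintype V] (G : SimpleGraph V)
    (T : V ≃ Fin (Fintype.card V)) (u : V) : Prop :=
  nComp G {v | T v ≤ T u} < nComp G {v | T v < T u}

section Aux

variable {V : Type*} (G : SimpleGraph V)

/-- The inclusion homomorphism between induced subgraphs. -/
def inclHom (A : Set V) (u : V) : G.induce A →g G.induce (insert u A) where
  toFun := fun x => ⟨x.1, Set.mem_insert_of_mem _ x.2⟩
  map_rel' := fun h => h

lemma nComp_insert_le [Finite V] (A : Set V) (u : V) :
    nComp G (insert u A) ≤ nComp G A + 1 := by
  classical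
  set f : (G.induce A).ConnectedComponent ⊕ Unit → (G.induce (insert u A)).ConnectedComponent :=
    Sum.elim (SimpleGraph.ConnectedComponent.map (inclHom G A u))
      (fun _ => (G.induce (insert u A)).connectedComponentMk ⟨u, Set.mem_insert u A⟩) with hf
  have hsurj : Function.Surjective f := by
    intro c
    obtain ⟨⟨x, hx⟩, rfl⟩ := c.exists_rep
    rcases hx with rfl | hxA
    · exact ⟨Sum.inr (), rfl⟩
    · exact ⟨Sum.inl ((G.induce A).connectedComponentMk ⟨x, hxA⟩), by
        rfl⟩
  calc nComp G (insert u A) ≤ Nat.card ((G.induce A).ConnectedComponent ⊕ Unit) :=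
        Nat.card_le_card_of_surjective f hsurj
    _ = nComp G A + 1 := by rw [Nat.card_sum]; simp [nComp]

lemma nComp_insert_le_of_reachable [Finite V] (A : Set V) (u : V)
    (h : ∃ x, ∃ hx : x ∈ A, (G.induce (insert u A)).Reachable ⟨u, Set.mem_insert u A⟩
      ⟨x, Set.mem_insert_of_mem _ hx⟩) :
    nComp G (insert u A) ≤ nComp G A := by
  classical
  obtain ⟨x0, hx0, hreach⟩ := h
  have hsurj : Function.Surjective
      (SimpleGraph.ConnectedComponent.map (inclHom G A u)) := by
    intro c
    obtain ⟨⟨x, hx⟩, rfl⟩ := c.exists_rep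
    rcases hx with rfl | hxA
    · refine ⟨(G.induce A).connectedComponentMk ⟨x0, hx0⟩, ?_⟩
      rw [SimpleGraph.ConnectedComponent.map_mk]
      exact (SimpleGraph.ConnectedComponent.sound hreach.symm)
    · exact ⟨(G.induce A).connectedComponentMk ⟨x, hxA⟩, rfl⟩
  exact Nat.card_le_card_of_surjective _ hsurj

end Aux

/-- The number of connectors in an activation sequence induced by a seedset
`OPT` is at most `|OPT|`. -/
theorem connectors_le_card_seedset {V : Type*} [Fintype V] [DecidableEq V]
    (G : SimpleGraph V) (θ : V → ℕ)
    (hθ : ∀ v, 2 ≤ θ v ∧ θ v ≤ Fintype.card V)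
    (OPT : Finset V) (T : V ≃ Fin (Fintype.card V)) (hT : ValidSeq G θ ↑OPT T) :
    {u | IsConnector G T u}.ncard ≤ OPT.card := by
  classical
  -- Finsets of connectors / seeds among the first `t` activated nodes
  set C : ℕ → Finset V := fun t => Finset.univ.filter (fun u => IsConnector G T u ∧ (T u : ℕ) < t)
    with hC
  set S : ℕ → Finset V := fun t => Finset.univ.filter (fun u => u ∈ OPT ∧ (T u : ℕ) < t) with hS
  have key : ∀ t, nComp G {v | (T v : ℕ) < t} + (C t).card ≤ (S t).card := by
    intro t
    induction t with
    | zero =>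
      have h1 : {v | (T v : ℕ) < 0} = (∅ : Set V) := by ext v; simp
      have h2 : nComp G (∅ : Set V) = 0 := by
        have : IsEmpty ((G.induce (∅ : Set V)).ConnectedComponent) := by
          constructor; intro c
          obtain ⟨⟨x, hx⟩, _⟩ := c.exists_rep
          exact hx
        simp [nComp, Nat.card_of_isEmpty]
      have h3 : C 0 = ∅ := by ext v; simp [hC]
      simp [h1, h2, h3]
    | succ t ih =>
      by_cases ht : t < Fintype.card V
      · set u := T.symm ⟨t, ht⟩ with hu
        have hTu : (T u : ℕ) = t := by simp [hu]
        have hvu : ∀ v, v = u ↔ (T v : ℕ) = t :=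
          fun v => ⟨fun h => h ▸ hTu,
            fun h => T.injective (Fin.ext (show ((T v : Fin _) : ℕ) = (T u : Fin _) by omega))⟩
        have hset1 : {v | (T v : ℕ) < t + 1} = insert u {v | (T v : ℕ) < t} := by
          ext v
          simp only [Set.mem_setOf_eq, Set.mem_insert_iff, hvu v]
          omega
        have huA : u ∉ {v | (T v : ℕ) < t} := by simp [hTu]
        have hle : {v : V | T v ≤ T u} = {v | (T v : ℕ) < t + 1} := by
          ext v; simp only [Set.mem_setOf_eq, Fin.le_def, hTu]; omega
        have hlt : {v : V | T v < T u} = {v | (T v : ℕ) < t} := by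
          ext v; simp only [Set.mem_setOf_eq, Fin.lt_def, hTu]
        -- S is monotone
        have hSmono : (S t).card ≤ (S (t + 1)).card := by
          apply Finset.card_le_card
          intro v hv
          simp only [hS, Finset.mem_filter] at *
          exact ⟨hv.1, hv.2.1, Nat.lt_succ_of_lt hv.2.2⟩
        by_cases hconn : IsConnector G T u
        · -- connector case: nComp drops by at least one
          have hdrop : nComp G {v | (T v : ℕ) < t + 1} + 1 ≤ nComp G {v | (T v : ℕ) < t} := by
            have := hconn
            rw [IsConnector, hle, hlt] at this
            omega
          have hCcard : (C (t + 1)).card = (C t).card + 1 := by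
            have hins : C (t + 1) = insert u (C t) := by
              ext v
              simp only [hC, Finset.mem_filter, Finset.mem_univ, true_and, Finset.mem_insert]
              constructor
              · rintro ⟨h1, h2⟩
                rcases Nat.lt_succ_iff_lt_or_eq.mp h2 with h | h
                · exact Or.inr ⟨h1, h⟩
                · exact Or.inl ((hvu v).2 h)
              · rintro (rfl | ⟨h1, h2⟩)
                · exact ⟨hconn, by omega⟩
                · exact ⟨h1, by omega⟩
            rw [hins, Finset.card_insert_of_notMem (by simp [hC, hTu])]
          omega
        · have hCeq : C (t + 1) = C t := by
            ext v
            simp only [hC, Finset.mem_filter, Finset.mem_univ, true_and]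
            constructor
            · rintro ⟨h1, h2⟩
              rcases Nat.lt_succ_iff_lt_or_eq.mp h2 with h | h
              · exact ⟨h1, h⟩
              · exact absurd (((hvu v).2 h) ▸ h1) hconn
            · rintro ⟨h1, h2⟩
              exact ⟨h1, by omega⟩
          have hCc : (C (t + 1)).card = (C t).card := by rw [hCeq]
          by_cases hopt : u ∈ OPT
          · -- seed case: nComp increases by at most one, S gains u
            have hinc : nComp G {v | (T v : ℕ) < t + 1} ≤ nComp G {v | (T v : ℕ) < t} + 1 := by
              rw [hset1]; exact nComp_insert_le G _ u
            have hScard : (S (t + 1)).card = (S t).card + 1 := by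
              have hins : S (t + 1) = insert u (S t) := by
                ext v
                simp only [hS, Finset.mem_filter, Finset.mem_univ, true_and, Finset.mem_insert]
                constructor
                · rintro ⟨h1, h2⟩
                  rcases Nat.lt_succ_iff_lt_or_eq.mp h2 with h | h
                  · exact Or.inr ⟨h1, h⟩
                  · exact Or.inl ((hvu v).2 h)
                · rintro (rfl | ⟨h1, h2⟩)
                  · exact ⟨hopt, by omega⟩
                  · exact ⟨h1, by omega⟩
              rw [hins, Finset.card_insert_of_notMem (by simp [hS, hTu])]
            omega
          · -- non-seed case: nComp does not increase
            have h2 : 2 ≤ compCard G {v : V | T v < T u} u :=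
              le_trans (hθ u).1 (hT u (by simpa using hopt))
            have hnontriv : Nontrivial {w : (insert u {v : V | T v < T u} : Set V) //
                (G.induce (insert u {v : V | T v < T u})).Reachable
                  ⟨u, Set.mem_insert u _⟩ w} := by
              rw [← Finite.one_lt_card_iff_nontrivial]
              exact lt_of_lt_of_le one_lt_two h2
            obtain ⟨⟨⟨x, hx⟩, hreach⟩, hne⟩ :=
              exists_ne (α := {w : (insert u {v : V | T v < T u} : Set V) //
                (G.induce (insert u {v : V | T v < T u})).Reachable
                  ⟨u, Set.mem_insert u _⟩ w})
                ⟨⟨u, Set.mem_insert u _⟩, SimpleGraph.Reachable.refl _⟩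
            have hxu : x ≠ u := by
              intro h; apply hne; apply Subtype.ext; apply Subtype.ext; exact h
            have hxA : x ∈ {v : V | T v < T u} := by
              rcases hx with rfl | h
              · exact absurd rfl hxu
              · exact h
            have hinc : nComp G {v | (T v : ℕ) < t + 1} ≤ nComp G {v | (T v : ℕ) < t} := by
              rw [hset1, ← hlt]
              exact nComp_insert_le_of_reachable G _ u ⟨x, hxA, hreach⟩
            omega
      · -- t ≥ Fintype.card V : nothing changes
        have hset : {v | (T v : ℕ) < t + 1} = {v | (T v : ℕ) < t} := by
          ext v
          have : (T v : ℕ) < Fintype.card V := (T v).2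
          simp only [Set.mem_setOf_eq]
          omega
        have hCeq : C (t + 1) = C t := by
          ext v
          have : (T v : ℕ) < Fintype.card V := (T v).2
          simp only [hC, Finset.mem_filter]
          constructor <;> rintro ⟨h1, h2, h3⟩ <;> exact ⟨h1, h2, by omega⟩
        have hSle : (S t).card ≤ (S (t + 1)).card := by
          apply Finset.card_le_card
          intro v hv
          simp only [hS, Finset.mem_filter] at *
          exact ⟨hv.1, hv.2.1, Nat.lt_succ_of_lt hv.2.2⟩
        rw [hset, hCeq]
        omega
  have hfinal := key (Fintype.card V)
  have hCn : {u | IsConnector G T u}.ncard = (C (Fintype.card V)).card := by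
    rw [hC]
    rw [Set.ncard_eq_toFinset_card']
    congr 1
    ext v
    have : (T v : ℕ) < Fintype.card V := (T v).2
    simp [this]
  have hSn : (S (Fintype.card V)).card ≤ OPT.card := by
    apply Finset.card_le_card
    intro v hv
    simp only [hS, Finset.mem_filter] at hv
    exact hv.2.1
  omega
end

section
/- For any integer $r \geq 1$, consider the path graph $G_r$ on vertices $v_1, \dots, v_{2r+1}$ with edges $\{v_i, v_{i+1}\}$, and threshold function $\theta(v_1) = \theta(v_{2r+1}) = 2$, $\theta(v_{r+1}) = 2r+1$, $\theta(v_i) = i$ for $1 < i \leq r$, and $\theta(v_i) = 2r + 2 - i$ for $r+2 \leq i < 2r+1$. Then: (a) the seedset $\{v_1, v_{2r+1}\}$ is feasible for the technology diffusion process; and (b) every feasible seedset that induces a connected subgraph of $G_r$ has size $\Omega(r)$ (specifically, at least $r/2 - 1$). -/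
/-- A set of nodes `A` is closed under the activation rule. -/
def Closed {V : Type*} (G : SimpleGraph V) (θ : V → ℕ) (A : Set V) : Prop :=
  ∀ v, θ v ≤ compCard G A v → v ∈ A

/-- The set of nodes eventually activated by the seedset `S`. -/
def activeSet {V : Type*} (G : SimpleGraph V) (θ : V → ℕ) (S : Set V) : Set V :=
  ⋂₀ {A : Set V | S ⊆ A ∧ Closed G θ A}

/-- A seedset is feasible when it eventually activates every node. -/
def Feasible {V : Type*} (G : SimpleGraph V) (θ : V → ℕ) (S : Set V) : Prop :=
  activeSet G θ S = Set.univ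

/-- The threshold function on the path graph `G_r` with `2r+1` vertices
`v_1, …, v_{2r+1}` (vertex `v_{i+1}` is index `i`). -/
def pathTheta (r : ℕ) (i : Fin (2 * r + 1)) : ℕ :=
  if (i : ℕ) = 0 ∨ (i : ℕ) = 2 * r then 2
  else if (i : ℕ) = r then 2 * r + 1
  else if (i : ℕ) < r then (i : ℕ) + 1
  else 2 * r + 1 - (i : ℕ)


open SimpleGraph


lemma natCard_set_Icc {n : ℕ} (x y : Fin n) :
    Nat.card (Set.Icc x y : Set (Fin n)) = (y : ℕ) + 1 - (x : ℕ) := by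
  rw [Nat.card_coe_set_eq, ← Finset.coe_Icc, Set.ncard_coe_finset, Fin.card_Icc]

lemma reach_icc {n : ℕ} {B : Set (Fin n)} :
    ∀ (d : ℕ) (x y : Fin n) (hxB : x ∈ B) (hyB : y ∈ B),
      (y : ℕ) = (x : ℕ) + d →
      (∀ m : Fin n, x ≤ m → m ≤ y → m ∈ B) →
      ((pathGraph n).induce B).Reachable ⟨x, hxB⟩ ⟨y, hyB⟩ := by
  intro d
  induction d with
  | zero =>
    intro x y hxB hyB hxy _
    have hx : x = y := Fin.ext (by omega)
    subst hx
    exact Reachable.refl _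
  | succ d ih =>
    intro x y hxB hyB hxy hmem
    have hyl := y.isLt
    have hy' : ((x : ℕ) + d) < n := by omega
    have h1 : x ≤ (⟨(x : ℕ) + d, hy'⟩ : Fin n) := by
      rw [Fin.le_def]; exact Nat.le_add_right _ _
    have h2 : (⟨(x : ℕ) + d, hy'⟩ : Fin n) ≤ y := by
      rw [Fin.le_def]; simp; omega
    have hy'B : (⟨(x : ℕ) + d, hy'⟩ : Fin n) ∈ B := hmem _ h1 h2
    have hr : ((pathGraph n).induce B).Reachable ⟨x, hxB⟩ ⟨⟨(x : ℕ) + d, hy'⟩, hy'B⟩ :=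
      ih x _ hxB hy'B rfl (fun m hm1 hm2 => hmem m hm1 (hm2.trans h2))
    have hadj : (pathGraph n).Adj ⟨(x : ℕ) + d, hy'⟩ y := pathGraph_adj.mpr (Or.inl (by simp; omega))
    have hadj' : ((pathGraph n).induce B).Adj ⟨⟨(x : ℕ) + d, hy'⟩, hy'B⟩ ⟨y, hyB⟩ := hadj
    exact hr.trans hadj'.reachable

lemma compCard_ge {n : ℕ} {A : Set (Fin n)} {v x y : Fin n} (hx : x ≤ v) (hy : v ≤ y)
    (hmem : ∀ m : Fin n, x ≤ m → m ≤ y → m ∈ insert v A) :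
    (y : ℕ) - (x : ℕ) + 1 ≤ compCard (pathGraph n) A v := by
  classical
  have hvB : v ∈ (insert v A : Set (Fin n)) := Set.mem_insert v A
  have hreach : ∀ (m : Fin n) (h1 : x ≤ m) (h2 : m ≤ y),
      ((pathGraph n).induce (insert v A)).Reachable ⟨v, hvB⟩ ⟨m, hmem m h1 h2⟩ := by
    intro m h1 h2
    rcases le_total v m with h | h
    · have hn : (v : ℕ) ≤ (m : ℕ) := h
      exact reach_icc ((m : ℕ) - (v : ℕ)) v m hvB (hmem m h1 h2) (by omega)
        (fun m' a b => hmem m' (hx.trans a) (b.trans h2))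
    · have hn : (m : ℕ) ≤ (v : ℕ) := h
      exact (reach_icc ((v : ℕ) - (m : ℕ)) m v (hmem m h1 h2) hvB (by omega)
        (fun m' a b => hmem m' (h1.trans a) (b.trans hy))).symm
  unfold compCard
  have key := Nat.card_le_card_of_injective
    (f := fun m : (Set.Icc x y : Set (Fin n)) =>
      (⟨⟨m.1, hmem m.1 m.2.1 m.2.2⟩, hreach m.1 m.2.1 m.2.2⟩ :
        {u : (insert v A : Set (Fin n)) //
          ((pathGraph n).induce (insert v A)).Reachable ⟨v, hvB⟩ u}))
    (fun a b hab => by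
      apply Subtype.ext
      exact congrArg (fun z : {u : (insert v A : Set (Fin n)) //
          ((pathGraph n).induce (insert v A)).Reachable ⟨v, hvB⟩ u} => z.1.1) hab)
  rw [natCard_set_Icc] at key
  have hxy : (x : ℕ) ≤ (y : ℕ) := le_trans hx hy
  omega

lemma compCard_le_one {V : Type*} {G : SimpleGraph V} {A : Set V} {v : V}
    (h : ∀ u ∈ A, ¬ G.Adj v u) : compCard G A v ≤ 1 := by
  have key : ∀ u : (insert v A : Set V),
      (G.induce (insert v A)).Reachable ⟨v, Set.mem_insert v A⟩ u → (u : V) = v := by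
    intro u hu
    obtain ⟨w⟩ := hu
    cases w with
    | nil => rfl
    | @cons _ b _ hadj p =>
      exfalso
      have hb : (b : V) ∈ insert v A := b.2
      have hvb : G.Adj v (b : V) := hadj
      rcases hb with hb | hb
      · rw [hb] at hvb; exact G.loopless.irrefl v hvb
      · exact h _ hb hvb
  have hsub : Subsingleton {u : (insert v A : Set V) //
      (G.induce (insert v A)).Reachable ⟨v, Set.mem_insert v A⟩ u} := by
    constructor
    rintro ⟨u1, h1⟩ ⟨u2, h2⟩
    apply Subtype.ext; apply Subtype.ext
    rw [key u1 h1, key u2 h2]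
  unfold compCard
  haveI := hsub
  rw [Nat.card_of_subsingleton (⟨⟨v, Set.mem_insert v A⟩, SimpleGraph.Reachable.refl _⟩ :
    {u : (insert v A : Set V) //
      (G.induce (insert v A)).Reachable ⟨v, Set.mem_insert v A⟩ u})]

lemma compCard_le_insert {V : Type*} [Finite V] (G : SimpleGraph V) (A : Set V) (v : V) :
    compCard G A v ≤ Nat.card (insert v A : Set V) := by
  unfold compCard
  exact Nat.card_le_card_of_injective Subtype.val Subtype.val_injective

lemma feasible_subset {V : Type*} {G : SimpleGraph V} {θ : V → ℕ} {S A : Set V}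
    (hF : Feasible G θ S) (hSA : S ⊆ A) (hC : Closed G θ A) : ∀ x, x ∈ A := by
  intro x
  have hx : x ∈ activeSet G θ S := by rw [hF]; trivial
  exact hx A ⟨hSA, hC⟩

lemma walk_hits {n : ℕ} {S : Set (Fin n)} {x z : ↥S}
    (p : ((pathGraph n).induce S).Walk x z) :
    ∀ m : ℕ, ((x : Fin n) : ℕ) ≤ m → m ≤ ((z : Fin n) : ℕ) →
      ∃ w ∈ p.support, ((w : Fin n) : ℕ) = m := by
  induction p with
  | nil =>
    rename_i u
    intro m h1 h2
    exact ⟨u, by simp, by omega⟩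
  | @cons a b c hadj p ih =>
    intro m h1 h2
    by_cases hm : ((a : Fin n) : ℕ) = m
    · exact ⟨a, by simp, hm⟩
    · have hadj' : (pathGraph n).Adj a b := hadj
      rw [pathGraph_adj] at hadj'
      have hb : ((b : Fin n) : ℕ) ≤ m := by omega
      obtain ⟨w, hw1, hw2⟩ := ih m hb h2
      exact ⟨w, by simp [SimpleGraph.Walk.support_cons]; right; exact hw1, hw2⟩

lemma theta_ge_two (r : ℕ) (hr : 1 ≤ r) (i : Fin (2 * r + 1)) : 2 ≤ pathTheta r i := by
  have h := i.isLt
  unfold pathTheta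
  split_ifs <;> omega

lemma closed_seed_univ (r : ℕ) (hr : 1 ≤ r) (A : Set (Fin (2 * r + 1)))
    (hC : Closed (pathGraph (2 * r + 1)) (pathTheta r) A)
    (h0 : (⟨0, by omega⟩ : Fin (2 * r + 1)) ∈ A)
    (h2r : (⟨2 * r, by omega⟩ : Fin (2 * r + 1)) ∈ A) :
    ∀ v, v ∈ A := by
  have hL : ∀ i (_ : i < r), (⟨i, by omega⟩ : Fin (2 * r + 1)) ∈ A := by
    intro i
    induction i using Nat.strong_induction_on with
    | _ i ih =>
      intro hi
      rcases Nat.eq_zero_or_pos i with h | h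
      · subst h; exact h0
      · apply hC
        have hcc := compCard_ge (A := A) (v := ⟨i, by omega⟩) (x := ⟨0, by omega⟩)
          (y := ⟨i, by omega⟩) (by exact Nat.zero_le i) (le_refl _) ?_
        · have hθ : pathTheta r (⟨i, by omega⟩ : Fin (2 * r + 1)) ≤ i + 1 := by
            unfold pathTheta
            simp only [Fin.val_mk]
            split_ifs <;> omega
          have hcc' : i + 1 ≤ compCard (pathGraph (2 * r + 1)) A ⟨i, by omega⟩ := by
            simpa using hcc
          exact le_trans hθ hcc'
        · intro m hm1 hm2
          have hm2' : (m : ℕ) ≤ i := hm2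
          rcases eq_or_lt_of_le hm2' with he | hl
          · rw [show m = (⟨i, by omega⟩ : Fin (2 * r + 1)) from Fin.ext he]
            exact Set.mem_insert _ _
          · refine Set.mem_insert_of_mem _ ?_
            have h' := ih (m : ℕ) hl (by omega)
            rwa [Fin.eta] at h'
  have hR : ∀ d (_ : d < r), (⟨2 * r - d, by omega⟩ : Fin (2 * r + 1)) ∈ A := by
    intro d
    induction d using Nat.strong_induction_on with
    | _ d ih =>
      intro hd
      rcases Nat.eq_zero_or_pos d with h | h
      · subst h; exact h2r
      · apply hC
        have hcc := compCard_ge (A := A) (v := ⟨2 * r - d, by omega⟩)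
          (x := ⟨2 * r - d, by omega⟩) (y := ⟨2 * r, by omega⟩)
          (le_refl _) (by rw [Fin.le_def]; simp only [Fin.val_mk]; omega) ?_
        · have hθ : pathTheta r (⟨2 * r - d, by omega⟩ : Fin (2 * r + 1)) ≤ d + 1 := by
            unfold pathTheta
            simp only [Fin.val_mk]
            split_ifs <;> omega
          have hcc' : d + 1 ≤ compCard (pathGraph (2 * r + 1)) A ⟨2 * r - d, by omega⟩ := by
            have he : 2 * r - (2 * r - d) + 1 = d + 1 := by omega
            simpa [he] using hcc
          exact le_trans hθ hcc'
        · intro m hm1 hm2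
          have hm1' : 2 * r - d ≤ (m : ℕ) := hm1
          rcases eq_or_lt_of_le hm1' with he | hl
          · rw [show m = (⟨2 * r - d, by omega⟩ : Fin (2 * r + 1)) from Fin.ext he.symm]
            exact Set.mem_insert _ _
          · refine Set.mem_insert_of_mem _ ?_
            have hmlt := m.isLt
            have hm2' : (m : ℕ) ≤ 2 * r := hm2
            have h' := ih (2 * r - (m : ℕ)) (by omega) (by omega)
            have hme : (⟨2 * r - (2 * r - (m : ℕ)), by omega⟩ : Fin (2 * r + 1)) = m :=
              Fin.ext (by simp only [Fin.val_mk]; omega)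
            rwa [hme] at h'
  have hM : (⟨r, by omega⟩ : Fin (2 * r + 1)) ∈ A := by
    apply hC
    have hcc := compCard_ge (A := A) (v := ⟨r, by omega⟩)
      (x := ⟨0, by omega⟩) (y := ⟨2 * r, by omega⟩)
      (by exact Nat.zero_le r) (by rw [Fin.le_def]; simp only [Fin.val_mk]; omega) ?_
    · have hθ : pathTheta r (⟨r, by omega⟩ : Fin (2 * r + 1)) ≤ 2 * r + 1 := by
        unfold pathTheta
        simp only [Fin.val_mk]
        split_ifs <;> omega
      have hcc' : 2 * r + 1 ≤ compCard (pathGraph (2 * r + 1)) A ⟨r, by omega⟩ := by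
        simpa using hcc
      exact le_trans hθ hcc'
    · intro m hm1 hm2
      have hmlt := m.isLt
      rcases lt_trichotomy (m : ℕ) r with hl | he | hg
      · refine Set.mem_insert_of_mem _ ?_
        have h' := hL (m : ℕ) hl
        rwa [Fin.eta] at h'
      · rw [show m = (⟨r, by omega⟩ : Fin (2 * r + 1)) from Fin.ext he]
        exact Set.mem_insert _ _
      · refine Set.mem_insert_of_mem _ ?_
        have h' := hR (2 * r - (m : ℕ)) (by omega)
        have hme : (⟨2 * r - (2 * r - (m : ℕ)), by omega⟩ : Fin (2 * r + 1)) = m :=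
          Fin.ext (by simp only [Fin.val_mk]; omega)
        rwa [hme] at h'
  intro v
  have hvlt := v.isLt
  rcases lt_trichotomy (v : ℕ) r with hl | he | hg
  · have h' := hL (v : ℕ) hl
    rwa [Fin.eta] at h'
  · rw [show v = (⟨r, by omega⟩ : Fin (2 * r + 1)) from Fin.ext he]
    exact hM
  · have h' := hR (2 * r - (v : ℕ)) (by omega)
    have hme : (⟨2 * r - (2 * r - (v : ℕ)), by omega⟩ : Fin (2 * r + 1)) = v :=
      Fin.ext (by simp only [Fin.val_mk]; omega)
    rwa [hme] at h'


lemma closedL (r : ℕ) (hr : 1 ≤ r) :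
    Closed (pathGraph (2 * r + 1)) (pathTheta r) {i : Fin (2 * r + 1) | (i : ℕ) < r} := by
  intro v hv
  by_contra hvn
  simp only [Set.mem_setOf_eq, not_lt] at hvn
  have hvlt := v.isLt
  rcases eq_or_lt_of_le hvn with he | hlt
  · have h1 := compCard_le_insert (pathGraph (2 * r + 1))
      {i : Fin (2 * r + 1) | (i : ℕ) < r} v
    have h2 : (insert v {i : Fin (2 * r + 1) | (i : ℕ) < r} : Set (Fin (2 * r + 1))) ⊆
        Set.Icc ⟨0, by omega⟩ ⟨r, by omega⟩ := by
      intro u hu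
      simp only [Set.mem_insert_iff, Set.mem_setOf_eq] at hu
      simp only [Set.mem_Icc, Fin.le_def, Fin.val_mk]
      rcases hu with rfl | hu <;> omega
    have h3 := Nat.card_mono (Set.toFinite _) h2
    rw [natCard_set_Icc] at h3
    simp only [Fin.val_mk] at h3
    have hθ : 2 * r + 1 ≤ pathTheta r v := by
      unfold pathTheta; split_ifs <;> omega
    omega
  · have h1 : compCard (pathGraph (2 * r + 1)) {i : Fin (2 * r + 1) | (i : ℕ) < r} v ≤ 1 := by
      apply compCard_le_one
      intro u hu hadj
      simp only [Set.mem_setOf_eq] at hu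
      rw [pathGraph_adj] at hadj
      omega
    have hθ := theta_ge_two r hr v
    omega

lemma closedR (r : ℕ) (hr : 1 ≤ r) :
    Closed (pathGraph (2 * r + 1)) (pathTheta r) {i : Fin (2 * r + 1) | r < (i : ℕ)} := by
  intro v hv
  by_contra hvn
  simp only [Set.mem_setOf_eq, not_lt] at hvn
  have hvlt := v.isLt
  rcases eq_or_lt_of_le hvn with he | hlt
  · have h1 := compCard_le_insert (pathGraph (2 * r + 1))
      {i : Fin (2 * r + 1) | r < (i : ℕ)} v
    have h2 : (insert v {i : Fin (2 * r + 1) | r < (i : ℕ)} : Set (Fin (2 * r + 1))) ⊆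
        Set.Icc ⟨r, by omega⟩ ⟨2 * r, by omega⟩ := by
      intro u hu
      simp only [Set.mem_insert_iff, Set.mem_setOf_eq] at hu
      simp only [Set.mem_Icc, Fin.le_def, Fin.val_mk]
      have := u.isLt
      rcases hu with rfl | hu <;> omega
    have h3 := Nat.card_mono (Set.toFinite _) h2
    rw [natCard_set_Icc] at h3
    simp only [Fin.val_mk] at h3
    have hθ : 2 * r + 1 ≤ pathTheta r v := by
      unfold pathTheta; split_ifs <;> omega
    omega
  · have h1 : compCard (pathGraph (2 * r + 1)) {i : Fin (2 * r + 1) | r < (i : ℕ)} v ≤ 1 := by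
      apply compCard_le_one
      intro u hu hadj
      simp only [Set.mem_setOf_eq] at hu
      rw [pathGraph_adj] at hadj
      omega
    have hθ := theta_ge_two r hr v
    omega


/-- On the path `G_r`: (a) the seedset `{v_1, v_{2r+1}}` is feasible, and
(b) every feasible seedset inducing a connected subgraph has size `Ω(r)`
(at least `r/2 - 1`). -/
theorem path_connected_seedset_gap (r : ℕ) (hr : 1 ≤ r) :
    Feasible (SimpleGraph.pathGraph (2 * r + 1)) (pathTheta r)
      {i : Fin (2 * r + 1) | (i : ℕ) = 0 ∨ (i : ℕ) = 2 * r} ∧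
    ∀ S : Set (Fin (2 * r + 1)),
      Feasible (SimpleGraph.pathGraph (2 * r + 1)) (pathTheta r) S →
      ((SimpleGraph.pathGraph (2 * r + 1)).induce S).Connected →
      r / 2 - 1 ≤ S.ncard := by
  constructor
  · unfold Feasible activeSet
    exact Set.eq_univ_of_forall fun x => Set.mem_sInter.mpr fun A hA =>
      closed_seed_univ r hr A hA.2 (hA.1 (Or.inl rfl)) (hA.1 (Or.inr rfl)) x
  · intro S hF hCon
    obtain ⟨⟨x0, hx0⟩⟩ := hCon.nonempty
    have hfin := S.toFinite
    have hFne : hfin.toFinset.Nonempty := by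
      rw [Set.Finite.toFinset_nonempty]; exact ⟨x0, hx0⟩
    set a := hfin.toFinset.min' hFne with ha_def
    set b := hfin.toFinset.max' hFne with hb_def
    have haS : a ∈ S := hfin.mem_toFinset.mp (hfin.toFinset.min'_mem hFne)
    have hbS : b ∈ S := hfin.mem_toFinset.mp (hfin.toFinset.max'_mem hFne)
    have hamin : ∀ u ∈ S, a ≤ u := fun u hu =>
      hfin.toFinset.min'_le u (hfin.mem_toFinset.mpr hu)
    have hbmax : ∀ u ∈ S, u ≤ b := fun u hu =>
      hfin.toFinset.le_max' u (hfin.mem_toFinset.mpr hu)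
    have hint : ∀ m : Fin (2 * r + 1), a ≤ m → m ≤ b → m ∈ S := by
      intro m h1 h2
      obtain ⟨w⟩ := hCon.preconnected ⟨a, haS⟩ ⟨b, hbS⟩
      obtain ⟨u, hu, hval⟩ := walk_hits w (m : ℕ) h1 h2
      have hmu : m = u.1 := Fin.ext hval.symm
      rw [hmu]; exact u.2
    have hIccsub : Set.Icc a b ⊆ S := fun u hu =>
      hint u (Set.mem_Icc.mp hu).1 (Set.mem_Icc.mp hu).2
    have hxR : ∃ u ∈ S, r ≤ (u : ℕ) := by
      by_contra hc
      push_neg at hc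
      have hall := feasible_subset hF (A := {i : Fin (2 * r + 1) | (i : ℕ) < r})
        (fun u hu => hc u hu) (closedL r hr) ⟨2 * r, by omega⟩
      simp only [Set.mem_setOf_eq, Fin.val_mk] at hall
      omega
    have hyL : ∃ u ∈ S, (u : ℕ) ≤ r := by
      by_contra hc
      push_neg at hc
      have hall := feasible_subset hF (A := {i : Fin (2 * r + 1) | r < (i : ℕ)})
        (fun u hu => hc u hu) (closedR r hr) ⟨0, by omega⟩
      simp only [Set.mem_setOf_eq, Fin.val_mk] at hall
      omega
    obtain ⟨x, hxS, hxr⟩ := hxR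
    obtain ⟨y, hyS, hyr⟩ := hyL
    have har : (a : ℕ) ≤ r := le_trans (show (a : ℕ) ≤ (y : ℕ) from hamin y hyS) hyr
    have hbr : r ≤ (b : ℕ) := le_trans hxr (show (x : ℕ) ≤ (b : ℕ) from hbmax x hxS)
    have hab : (a : ℕ) ≤ (b : ℕ) := le_trans har hbr
    have halt := a.isLt
    have hblt := b.isLt
    have hcard : (b : ℕ) - (a : ℕ) + 1 ≤ S.ncard := by
      have h1 := Set.ncard_le_ncard hIccsub hfin
      rw [← Nat.card_coe_set_eq, natCard_set_Icc] at h1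
      omega
    rcases le_or_gt 2 (a : ℕ) with ha2 | ha2
    · rcases le_or_gt (b : ℕ) (2 * r - 2) with hb2 | hb2
      · have hgrow : (a : ℕ) ≤ (b : ℕ) - (a : ℕ) + 2 ∨
            2 * r - (b : ℕ) ≤ (b : ℕ) - (a : ℕ) + 2 := by
          by_contra hg
          push_neg at hg
          obtain ⟨hg1, hg2⟩ := hg
          have hSclosed : Closed (pathGraph (2 * r + 1)) (pathTheta r) S := by
            intro v hv
            by_contra hvS
            have hvlt := v.isLt
            have hout : (v : ℕ) < (a : ℕ) ∨ (b : ℕ) < (v : ℕ) := by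
              by_contra ho
              push_neg at ho
              exact hvS (hint v ho.1 ho.2)
            rcases hout with hlt | hgt
            · rcases eq_or_lt_of_le (Nat.succ_le_of_lt hlt) with he | hlt2
              · have h1 := compCard_le_insert (pathGraph (2 * r + 1)) S v
                have h2 : (insert v S : Set (Fin (2 * r + 1))) ⊆ Set.Icc v b := by
                  intro u hu
                  simp only [Set.mem_insert_iff] at hu
                  simp only [Set.mem_Icc, Fin.le_def]
                  rcases hu with rfl | hu
                  · omega
                  · have h4 : (a : ℕ) ≤ (u : ℕ) := hamin u hu
                    have h5 : (u : ℕ) ≤ (b : ℕ) := hbmax u hu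
                    omega
                have h3 := Nat.card_mono (Set.toFinite _) h2
                rw [natCard_set_Icc] at h3
                have hθ : (a : ℕ) ≤ pathTheta r v := by
                  unfold pathTheta; split_ifs <;> omega
                omega
              · have h1 : compCard (pathGraph (2 * r + 1)) S v ≤ 1 := by
                  apply compCard_le_one
                  intro u hu hadj
                  rw [pathGraph_adj] at hadj
                  have h4 : (a : ℕ) ≤ (u : ℕ) := hamin u hu
                  omega
                have hθ := theta_ge_two r hr v
                omega
            · rcases eq_or_lt_of_le (Nat.succ_le_of_lt hgt) with he | hgt2
              · have h1 := compCard_le_insert (pathGraph (2 * r + 1)) S v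
                have h2 : (insert v S : Set (Fin (2 * r + 1))) ⊆ Set.Icc a v := by
                  intro u hu
                  simp only [Set.mem_insert_iff] at hu
                  simp only [Set.mem_Icc, Fin.le_def]
                  rcases hu with rfl | hu
                  · omega
                  · have h4 : (a : ℕ) ≤ (u : ℕ) := hamin u hu
                    have h5 : (u : ℕ) ≤ (b : ℕ) := hbmax u hu
                    omega
                have h3 := Nat.card_mono (Set.toFinite _) h2
                rw [natCard_set_Icc] at h3
                have hθ : 2 * r - (b : ℕ) ≤ pathTheta r v := by
                  unfold pathTheta; split_ifs <;> omega
                omega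
              · have h1 : compCard (pathGraph (2 * r + 1)) S v ≤ 1 := by
                  apply compCard_le_one
                  intro u hu hadj
                  rw [pathGraph_adj] at hadj
                  have h5 : (u : ℕ) ≤ (b : ℕ) := hbmax u hu
                  omega
                have hθ := theta_ge_two r hr v
                omega
          have h0S := feasible_subset hF (subset_refl S) hSclosed ⟨0, by omega⟩
          have h6 : (a : ℕ) ≤ (0 : ℕ) := hamin _ h0S
          omega
        omega
      · omega
    · omega
end

section
/- For any integer $r \geq 1$, in the path graph $G_r$ on vertices $v_1, \dots, v_{2r+1}$ with thresholds $\theta(v_1) = \theta(v_{2r+1}) = 2$, $\theta(v_{r+1}) = 2r+1$, $\theta(v_i) = i$ for $1 < i \leq r$, and $\theta(v_i) = 2r+2-i$ for $r+2 \leq i < 2r+1$, the two-element seedset $\{v_1, v_{2r+1}\}$ activates every node of the graph. -/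
lemma path_reach {n : ℕ} (s : Set (Fin n)) {a b : ℕ} (hab : a ≤ b)
    (hmem : ∀ j (h : j < n), a ≤ j → j ≤ b → (⟨j, h⟩ : Fin n) ∈ s) :
    ∀ (ha : a < n) (hb : b < n) (pa : (⟨a, ha⟩ : Fin n) ∈ s) (pb : (⟨b, hb⟩ : Fin n) ∈ s),
    ((SimpleGraph.pathGraph n).induce s).Reachable ⟨⟨a, ha⟩, pa⟩ ⟨⟨b, hb⟩, pb⟩ := by
  induction b with
  | zero =>
    intro ha hb pa pb
    have : a = 0 := Nat.le_zero.mp hab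
    subst this
    exact SimpleGraph.Reachable.refl _
  | succ c ih =>
    intro ha hb pa pb
    rcases Nat.lt_or_ge a (c + 1) with h | h
    · have hac : a ≤ c := Nat.lt_succ_iff.mp h
      have hc : c < n := Nat.lt_of_succ_lt hb
      have pc : (⟨c, hc⟩ : Fin n) ∈ s := hmem c hc hac (Nat.le_succ c)
      have h1 := ih hac (fun j hj h1 h2 => hmem j hj h1 (le_trans h2 (Nat.le_succ c))) ha hc pa pc
      refine h1.trans (SimpleGraph.Adj.reachable ?_)
      show ((SimpleGraph.pathGraph n).induce s).Adj ⟨⟨c, hc⟩, pc⟩ ⟨⟨c + 1, hb⟩, pb⟩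
      simp [SimpleGraph.comap_adj, SimpleGraph.pathGraph_adj]
    · have : a = c + 1 := le_antisymm hab h
      subst this
      exact SimpleGraph.Reachable.refl _

lemma compCard_lb {V : Type*} [Finite V] (G : SimpleGraph V) (A : Set V) (v : V) (m : ℕ)
    (f : Fin m → {u : (insert v A : Set V) //
      (G.induce (insert v A)).Reachable ⟨v, Set.mem_insert v A⟩ u})
    (hf : Function.Injective f) : m ≤ compCard G A v := by
  have := Nat.card_le_card_of_injective f hf
  simpa [compCard] using this

/-- On the path `G_r`, the two-element seedset `{v_1, v_{2r+1}}` activates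
every node of the graph. -/
theorem path_endpoints_feasible (r : ℕ) (hr : 1 ≤ r) :
    Feasible (SimpleGraph.pathGraph (2 * r + 1)) (pathTheta r)
      {i : Fin (2 * r + 1) | (i : ℕ) = 0 ∨ (i : ℕ) = 2 * r} := by
  set n := 2 * r + 1 with hn
  set G := SimpleGraph.pathGraph n with hG
  rw [Feasible, Set.eq_univ_iff_forall]
  intro x
  rw [activeSet, Set.mem_sInter]
  rintro A ⟨hS, hC⟩
  -- membership helper
  have memv : ∀ (v : Fin n) (j : ℕ) (hj : j < n), (⟨j, hj⟩ : Fin n) = v ∨ (⟨j, hj⟩ : Fin n) ∈ A →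
      (⟨j, hj⟩ : Fin n) ∈ insert v A := by
    rintro v j hj (h | h)
    · exact h ▸ Set.mem_insert v A
    · exact Set.mem_insert_of_mem v h
  -- left propagation
  have left : ∀ k, k < r → ∀ (h : k < n), (⟨k, h⟩ : Fin n) ∈ A := by
    intro k
    induction k using Nat.strong_induction_on with
    | _ k ih =>
      intro hkr h
      rcases Nat.eq_zero_or_pos k with rfl | hk0
      · exact hS (by simp)
      · set v : Fin n := ⟨k, h⟩ with hv
        have hmem : ∀ j (hj : j < n), 0 ≤ j → j ≤ k → (⟨j, hj⟩ : Fin n) ∈ insert v A := by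
          intro j hj _ hjk
          rcases Nat.lt_or_ge j k with hjk' | hjk'
          · exact Set.mem_insert_of_mem v (ih j hjk' (lt_trans hjk' hkr) hj)
          · have : j = k := le_antisymm hjk hjk'
            subst this; exact Set.mem_insert v A
        apply hC v
        have hθ : pathTheta r v = k + 1 := by
          simp only [pathTheta, hv]
          have h2r : k ≠ 2 * r := by omega
          have : ¬ ((k : ℕ) = 0 ∨ (k : ℕ) = 2 * r) := by omega
          rw [if_neg this, if_neg (by omega : ¬ (k : ℕ) = r), if_pos hkr]
        rw [hθ]
        refine compCard_lb G A v (k + 1) (fun j =>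
          ⟨⟨⟨(j : ℕ), by omega⟩, hmem j (by omega) (Nat.zero_le _) (by omega)⟩, ?_⟩) ?_
        · exact (path_reach (insert v A) (by omega : (j : ℕ) ≤ k)
            (fun j' hj' _ h2 => hmem j' hj' (Nat.zero_le _) h2) (by omega) h
            (hmem j (by omega) (Nat.zero_le _) (by omega)) (Set.mem_insert v A)).symm
        · intro x y hxy
          have : (x : ℕ) = (y : ℕ) := by
            simpa [Fin.ext_iff, Subtype.ext_iff] using hxy
          exact Fin.ext this
  -- right propagation
  have right : ∀ k, k < r → ∀ (h : 2 * r - k < n), (⟨2 * r - k, h⟩ : Fin n) ∈ A := by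
    intro k
    induction k using Nat.strong_induction_on with
    | _ k ih =>
      intro hkr h
      rcases Nat.eq_zero_or_pos k with rfl | hk0
      · exact hS (by simp)
      · set v : Fin n := ⟨2 * r - k, h⟩ with hv
        have hmem : ∀ j (hj : j < n), 2 * r - k ≤ j → j ≤ 2 * r → (⟨j, hj⟩ : Fin n) ∈ insert v A := by
          intro j hj hjl hjr
          rcases Nat.lt_or_ge (2 * r - k) j with hjk' | hjk'
          · have := ih (2 * r - j) (by omega) (by omega) (by omega)
            have hje : (⟨j, hj⟩ : Fin n) = ⟨2 * r - (2 * r - j), by omega⟩ :=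
              Fin.ext (show j = 2 * r - (2 * r - j) by omega)
            rw [hje]; exact Set.mem_insert_of_mem v this
          · have : j = 2 * r - k := le_antisymm hjk' hjl
            subst this; exact Set.mem_insert v A
        apply hC v
        have hθ : pathTheta r v = k + 1 := by
          simp only [pathTheta, hv]
          rw [if_neg (by omega : ¬ ((2 * r - k : ℕ) = 0 ∨ (2 * r - k : ℕ) = 2 * r)),
            if_neg (by omega : ¬ (2 * r - k : ℕ) = r), if_neg (by omega : ¬ (2 * r - k : ℕ) < r)]
          omega
        rw [hθ]
        refine compCard_lb G A v (k + 1) (fun j =>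
          ⟨⟨⟨2 * r - k + (j : ℕ), by omega⟩,
            hmem (2 * r - k + (j : ℕ)) (by omega) (by omega) (by omega)⟩, ?_⟩) ?_
        · exact path_reach (insert v A) (by omega : 2 * r - k ≤ 2 * r - k + (j : ℕ))
            (fun j' hj' h1 h2 => hmem j' hj' h1 (by omega)) h
            (by omega) (Set.mem_insert v A)
            (hmem (2 * r - k + (j : ℕ)) (by omega) (by omega) (by omega))
        · intro x y hxy
          have : (x : ℕ) = (y : ℕ) := by
            simpa [Fin.ext_iff, Subtype.ext_iff] using hxy
          omega
  -- middle vertex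
  have mid : ∀ (h : r < n), (⟨r, h⟩ : Fin n) ∈ A := by
    intro h
    set v : Fin n := ⟨r, h⟩ with hv
    have hmem : ∀ j (hj : j < n), 0 ≤ j → j ≤ 2 * r → (⟨j, hj⟩ : Fin n) ∈ insert v A := by
      intro j hj _ hjr
      rcases lt_trichotomy j r with hjr' | hjr' | hjr'
      · exact Set.mem_insert_of_mem v (left j hjr' hj)
      · subst hjr'; exact Set.mem_insert v A
      · have := right (2 * r - j) (by omega) (by omega)
        have hje : (⟨j, hj⟩ : Fin n) = ⟨2 * r - (2 * r - j), by omega⟩ :=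
          Fin.ext (show j = 2 * r - (2 * r - j) by omega)
        rw [hje]; exact Set.mem_insert_of_mem v this
    apply hC v
    have hθ : pathTheta r v = 2 * r + 1 := by
      simp only [pathTheta, hv]
      rw [if_neg (by omega : ¬ ((r : ℕ) = 0 ∨ (r : ℕ) = 2 * r))]
      simp
    rw [hθ]
    refine compCard_lb G A v (2 * r + 1) (fun j =>
      ⟨⟨⟨(j : ℕ), by omega⟩, hmem j (by omega) (Nat.zero_le _) (by omega)⟩, ?_⟩) ?_
    · rcases Nat.lt_or_ge (j : ℕ) r with hjr' | hjr'
      · exact (path_reach (insert v A) (le_of_lt hjr') (fun j' hj' h1 h2 =>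
          hmem j' hj' (Nat.zero_le _) (by omega)) (by omega) h
          (hmem j (by omega) (Nat.zero_le _) (by omega)) (Set.mem_insert v A)).symm
      · exact path_reach (insert v A) hjr' (fun j' hj' h1 h2 =>
          hmem j' hj' (Nat.zero_le _) (by omega)) h (by omega)
          (Set.mem_insert v A) (hmem j (by omega) (Nat.zero_le _) (by omega))
    · intro x y hxy
      have : (x : ℕ) = (y : ℕ) := by
        simpa [Fin.ext_iff, Subtype.ext_iff] using hxy
      exact Fin.ext this
  -- conclude
  rcases lt_trichotomy (x : ℕ) r with hx | hx | hx
  · have := left (x : ℕ) hx x.isLt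
    simpa using this
  · have := mid (by omega)
    have hx' : x = ⟨r, by omega⟩ := Fin.ext hx
    rw [hx']; exact this
  · have := right (2 * r - (x : ℕ)) (by omega) (by omega)
    have hx' : x = ⟨2 * r - (2 * r - (x : ℕ)), by omega⟩ :=
      Fin.ext (show (x : ℕ) = 2 * r - (2 * r - (x : ℕ)) by omega)
    rw [hx']; exact this
end

section
/- Let $n \geq 6$. Consider the graph $G$ on vertices $\{v_1, \dots, v_n\}$ where $\{v_1, \dots, v_{n-4}\}$ form a clique, and additional edges are $\{v_1, v_{n-3}\}$, $\{v_1, v_{n-2}\}$, $\{v_{n-3}, v_{n-1}\}$, $\{v_{n-2}, v_n\}$, and $\{v_{n-3}, v_{n-2}\}$. Let $\theta(v_i) = 2$ for $i \leq n-4$ and $\theta(v_i) = n$ for $i > n-4$. Let $f(S)$ be the number of nodes eventually activated by seedset $S$. Then for $S_1 = \{v_{n-3}\}$ and $S_2 = \{v_{n-2}\}$: $f(S_1) = f(S_2) = n - 3$ and $f(S_1 \cup S_2) = n - 2$; hence $f(S_1) + f(S_2) > f(S_1 \cup S_2)$ and $f$ is not supermodular. -/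
/-- The clique `{v_1,…,v_{n-4}}` with pendant structure on
`v_{n-3}, v_{n-2}, v_{n-1}, v_n` (vertex `v_{k+1}` is index `k`): extra
edges `{v_1,v_{n-3}}`, `{v_1,v_{n-2}}`, `{v_{n-3},v_{n-1}}`,
`{v_{n-2},v_n}`, `{v_{n-3},v_{n-2}}`. -/
def G12 (n : ℕ) : SimpleGraph (Fin n) :=
  SimpleGraph.fromRel (fun i j =>
    ((i : ℕ) < n - 4 ∧ (j : ℕ) < n - 4) ∨
    ((i : ℕ) = 0 ∧ (j : ℕ) = n - 4) ∨
    ((i : ℕ) = 0 ∧ (j : ℕ) = n - 3) ∨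
    ((i : ℕ) = n - 4 ∧ (j : ℕ) = n - 2) ∨
    ((i : ℕ) = n - 3 ∧ (j : ℕ) = n - 1) ∨
    ((i : ℕ) = n - 4 ∧ (j : ℕ) = n - 3))

def theta12 (n : ℕ) (i : Fin n) : ℕ :=
  if (i : ℕ) < n - 4 then 2 else n

/-- The influence function: the number of nodes eventually activated. -/
noncomputable def f12 (n : ℕ) (S : Set (Fin n)) : ℕ :=
  (activeSet (G12 n) (theta12 n) S).ncard

lemma compCard_le {V : Type*} [Finite V] (G : SimpleGraph V) (A : Set V) (v : V) :
    compCard G A v ≤ (insert v A).ncard := by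
  rw [compCard, ← Nat.card_coe_set_eq]
  exact Nat.card_le_card_of_injective Subtype.val Subtype.val_injective

lemma two_le_compCard {V : Type*} [Finite V] (G : SimpleGraph V) (A : Set V) {v u : V}
    (hu : u ∈ A) (hadj : G.Adj v u) : 2 ≤ compCard G A v := by
  rw [compCard, show (2:ℕ) = 1 + 1 from rfl, Nat.succ_le_iff, Finite.one_lt_card_iff_nontrivial]
  have hne : v ≠ u := hadj.ne
  refine ⟨⟨⟨v, Set.mem_insert v A⟩, SimpleGraph.Reachable.refl _⟩,
    ⟨⟨u, Set.mem_insert_of_mem v hu⟩, SimpleGraph.Adj.reachable ?_⟩, ?_⟩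
  · exact hadj
  · simp [Subtype.ext_iff, hne]

lemma activeSet_eq {V : Type*} (G : SimpleGraph V) (θ : V → ℕ) (S A : Set V)
    (hSA : S ⊆ A) (hA : Closed G θ A)
    (hmin : ∀ B, S ⊆ B → Closed G θ B → A ⊆ B) : activeSet G θ S = A :=
  subset_antisymm (Set.sInter_subset_of_mem ⟨hSA, hA⟩)
    (Set.subset_sInter fun B hB => hmin B hB.1 hB.2)

lemma g12_adj {n : ℕ} {i j : Fin n} (hij : (i:ℕ) ≠ (j:ℕ))
    (h : ((i:ℕ) < n-4 ∧ (j:ℕ) < n-4) ∨ ((i:ℕ) = 0 ∧ (j:ℕ) = n-4) ∨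
      ((i:ℕ) = 0 ∧ (j:ℕ) = n-3)) : (G12 n).Adj i j := by
  rw [G12, SimpleGraph.fromRel_adj]
  exact ⟨fun h' => hij (congrArg _ h'), by tauto⟩

lemma mem_of_closed {n : ℕ} {B : Set (Fin n)} (hB : Closed (G12 n) (theta12 n) B)
    {v u : Fin n} (hu : u ∈ B) (hadj : (G12 n).Adj v u) (hv : (v:ℕ) < n - 4) : v ∈ B :=
  hB v (by simpa [theta12, hv] using two_le_compCard (G12 n) B hu hadj)

lemma clique_subset {n : ℕ} (hn : 6 ≤ n) {B : Set (Fin n)}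
    (hB : Closed (G12 n) (theta12 n) B) (h0 : (⟨0, by omega⟩ : Fin n) ∈ B) :
    ∀ i : Fin n, (i:ℕ) < n - 4 → i ∈ B := by
  intro i hi
  by_cases h : (i:ℕ) = 0
  · have : i = (⟨0, by omega⟩ : Fin n) := Fin.ext h
    rwa [this]
  · exact mem_of_closed hB h0 (g12_adj (by simpa using h) (Or.inl ⟨hi, by simp; omega⟩)) hi

lemma closed_of {n : ℕ} {A : Set (Fin n)}
    (hsub : ∀ i : Fin n, (i:ℕ) < n - 4 → i ∈ A) (hcard : A.ncard + 1 < n) :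
    Closed (G12 n) (theta12 n) A := by
  intro v hv
  by_contra hvA
  have hθ : theta12 n v = n := by
    rw [theta12, if_neg (fun h => hvA (hsub v h))]
  rw [hθ] at hv
  have h1 := compCard_le (G12 n) A v
  have h2 := Set.ncard_insert_le v A
  omega

lemma ncard_le {n : ℕ} (h : 4 ≤ n) (k : ℕ) (hk : k < n) :
    {i : Fin n | (i:ℕ) ≤ k}.ncard = k + 1 := by
  have : {i : Fin n | (i:ℕ) ≤ k} = ↑(Finset.Iic (⟨k, hk⟩ : Fin n)) := by
    ext i
    simp [Fin.le_def]
  rw [this, Set.ncard_coe_finset, Fin.card_Iic]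

lemma ncard_lt {n : ℕ} (k : ℕ) (hk : k < n) :
    {i : Fin n | (i:ℕ) < k}.ncard = k := by
  have : {i : Fin n | (i:ℕ) < k} = ↑(Finset.Iio (⟨k, hk⟩ : Fin n)) := by
    ext i
    simp [Fin.lt_def]
  rw [this, Set.ncard_coe_finset, Fin.card_Iio]

/-- The influence function is not supermodular: for `S₁ = {v_{n-3}}` and
`S₂ = {v_{n-2}}`, `f(S₁) + f(S₂) > f(S₁ ∪ S₂)`. -/
theorem not_supermodular (n : ℕ) (hn : 6 ≤ n) :
    f12 n {i | (i : ℕ) = n - 4} = n - 3 ∧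
    f12 n {i | (i : ℕ) = n - 3} = n - 3 ∧
    f12 n ({i | (i : ℕ) = n - 4} ∪ {i | (i : ℕ) = n - 3}) = n - 2 ∧
    f12 n ({i | (i : ℕ) = n - 4} ∪ {i | (i : ℕ) = n - 3})
      < f12 n {i | (i : ℕ) = n - 4} + f12 n {i | (i : ℕ) = n - 3} := by
  set v4 : Fin n := ⟨n - 4, by omega⟩ with hv4
  set v3 : Fin n := ⟨n - 3, by omega⟩ with hv3
  set z : Fin n := ⟨0, by omega⟩ with hz
  -- cardinalities of the three closed sets
  have hc1 : {i : Fin n | (i:ℕ) ≤ n - 4}.ncard = n - 3 := by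
    rw [ncard_le (by omega) (n-4) (by omega)]; omega
  have hc3 : {i : Fin n | (i:ℕ) ≤ n - 3}.ncard = n - 2 := by
    rw [ncard_le (by omega) (n-3) (by omega)]; omega
  have hc2 : {i : Fin n | (i:ℕ) < n - 4 ∨ (i:ℕ) = n - 3}.ncard = n - 3 := by
    have he : {i : Fin n | (i:ℕ) < n - 4 ∨ (i:ℕ) = n - 3}
        = insert v3 {i : Fin n | (i:ℕ) < n - 4} := by
      ext i
      simp only [Set.mem_setOf_eq, Set.mem_insert_iff]
      constructor
      · rintro (h | h)
        · exact Or.inr h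
        · exact Or.inl (Fin.ext h)
      · rintro (h | h)
        · exact Or.inr (by rw [h])
        · exact Or.inl h
    rw [he, Set.ncard_insert_of_notMem (by simp [hv3]; omega) (Set.toFinite _),
      ncard_lt (n-4) (by omega)]
    omega
  -- activeSet computations
  have hA1 : activeSet (G12 n) (theta12 n) {i | (i : ℕ) = n - 4}
      = {i : Fin n | (i:ℕ) ≤ n - 4} := by
    apply activeSet_eq
    · intro i hi; simp only [Set.mem_setOf_eq] at hi ⊢; omega
    · exact closed_of (fun i hi => le_of_lt hi) (by rw [hc1]; omega)
    · intro B hSB hB i hi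
      simp only [Set.mem_setOf_eq] at hi
      have h4 : v4 ∈ B := hSB (by simp [hv4])
      have h0 : z ∈ B := mem_of_closed hB h4
        (g12_adj (by simp [hz, hv4]; omega) (Or.inr (Or.inl ⟨by simp [hz], by simp [hv4]⟩)))
        (by simp [hz]; omega)
      rcases lt_or_eq_of_le hi with h | h
      · exact clique_subset hn hB h0 i h
      · have : i = v4 := Fin.ext h
        rwa [this]
  have hA2 : activeSet (G12 n) (theta12 n) {i | (i : ℕ) = n - 3}
      = {i : Fin n | (i:ℕ) < n - 4 ∨ (i:ℕ) = n - 3} := by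
    apply activeSet_eq
    · intro i hi; simp only [Set.mem_setOf_eq] at hi ⊢; omega
    · exact closed_of (fun i hi => Or.inl hi) (by rw [hc2]; omega)
    · intro B hSB hB i hi
      simp only [Set.mem_setOf_eq] at hi
      have h3 : v3 ∈ B := hSB (by simp [hv3])
      have h0 : z ∈ B := mem_of_closed hB h3
        (g12_adj (by simp [hz, hv3]; omega) (Or.inr (Or.inr ⟨by simp [hz], by simp [hv3]⟩)))
        (by simp [hz]; omega)
      rcases hi with h | h
      · exact clique_subset hn hB h0 i h
      · have : i = v3 := Fin.ext h
        rwa [this]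
  have hA3 : activeSet (G12 n) (theta12 n) ({i | (i : ℕ) = n - 4} ∪ {i | (i : ℕ) = n - 3})
      = {i : Fin n | (i:ℕ) ≤ n - 3} := by
    apply activeSet_eq
    · intro i hi
      simp only [Set.mem_union, Set.mem_setOf_eq] at hi ⊢
      omega
    · exact closed_of (fun i hi => by simp only [Set.mem_setOf_eq]; omega) (by rw [hc3]; omega)
    · intro B hSB hB i hi
      simp only [Set.mem_setOf_eq] at hi
      have h4 : v4 ∈ B := hSB (Or.inl (by simp [hv4]))
      have h0 : z ∈ B := mem_of_closed hB h4
        (g12_adj (by simp [hz, hv4]; omega) (Or.inr (Or.inl ⟨by simp [hz], by simp [hv4]⟩)))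
        (by simp [hz]; omega)
      rcases lt_or_eq_of_le hi with h | h
      · rcases lt_or_eq_of_le (Nat.lt_succ_iff.mp (by omega : (i:ℕ) < n - 4 + 1)) with h' | h'
        · exact clique_subset hn hB h0 i h'
        · have : i = v4 := Fin.ext h'
          rw [this]; exact h4
      · have : i = v3 := Fin.ext h
        rw [this]; exact hSB (Or.inr (by simp [hv3]))
  refine ⟨?_, ?_, ?_, ?_⟩
  · rw [f12, hA1, hc1]
  · rw [f12, hA2, hc2]
  · rw [f12, hA3, hc3]
  · rw [f12, f12, f12, hA1, hA2, hA3, hc1, hc2, hc3]; omega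
end
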